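/- Every walk from vertex 0 to vertex M+1 in G̃ consisting of exactly N+1 edges has the form 0 → b_1 → b_2 → … → b_N → M+1, where b_1, …, b_N ∈ {1, …, M} satisfy b_{n+1} − b_n ≥ a_min for all n = 1, …, N−1; in particular, its N interior vertices form a feasible selection satisfying |b_i − b_j| ≥ a_min for all i ≠ j. -/
import Mathlib


/-- Edge relation of the augmented graph `G̃` on vertices `{0, 1, …, M, M+1}`:
`(i, j)` with `i, j ∈ {1, …, M}` and `j − i ≥ a_min`, plus `(0, j)` and `(j, M+1)`
for every `j ∈ {1, …, M}`. -/
def EdgeTilde (M a_min : ℕ) (i j : ℕ) : Prop :=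
  (i ∈ Finset.Icc 1 M ∧ j ∈ Finset.Icc 1 M ∧ i + a_min ≤ j) ∨
  (i = 0 ∧ j ∈ Finset.Icc 1 M) ∨
  (i ∈ Finset.Icc 1 M ∧ j = M + 1)

/-- Every walk `p 0 → p 1 → … → p (N+1)` in `G̃` from vertex `0` to
vertex `M+1` with exactly `N+1` edges has all its `N` interior vertices in
`{1, …, M}` with consecutive gaps `≥ a_min`; in particular the interior vertices
form a feasible selection with pairwise spacing `≥ a_min`. -/
theorem walk_interior_is_feasible (M N a_min : ℕ) (hM : 0 < M) (hN : 0 < N)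
    (ha : 0 < a_min) (p : ℕ → ℕ) (h0 : p 0 = 0) (hend : p (N + 1) = M + 1)
    (hwalk : ∀ k < N + 1, EdgeTilde M a_min (p k) (p (k + 1))) :
    (∀ n, 1 ≤ n → n ≤ N → p n ∈ Finset.Icc 1 M) ∧
    (∀ n, 1 ≤ n → n + 1 ≤ N → p n + a_min ≤ p (n + 1)) ∧
    (∀ i j, 1 ≤ i → i ≤ N → 1 ≤ j → j ≤ N → i ≠ j →
      (a_min : ℤ) ≤ |(p i : ℤ) - (p j : ℤ)|) := by
  have hmem : ∀ n, 1 ≤ n → n ≤ N → p n ∈ Finset.Icc 1 M := by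
    intro n h1 h2
    have e1 := hwalk (n - 1) (by omega)
    rw [Nat.sub_add_cancel h1] at e1
    rcases e1 with ⟨_, h, _⟩ | ⟨_, h⟩ | ⟨_, h⟩
    · exact h
    · exact h
    · -- p n = M + 1, derive contradiction from the next edge
      exfalso
      have e2 := hwalk n (by omega)
      rcases e2 with ⟨h', _⟩ | ⟨h', _⟩ | ⟨h', _⟩ <;>
        simp [Finset.mem_Icc, h] at h' <;> omega
  have hgap : ∀ n, 1 ≤ n → n + 1 ≤ N → p n + a_min ≤ p (n + 1) := by
    intro n h1 h2
    have e := hwalk n (by omega)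
    have m1 := hmem n h1 (by omega)
    have m2 := hmem (n + 1) (by omega) h2
    simp only [Finset.mem_Icc] at m1 m2
    rcases e with ⟨_, _, h⟩ | ⟨h, _⟩ | ⟨_, h⟩ <;> omega
  refine ⟨hmem, hgap, ?_⟩
  -- first show monotone gap: i < j → p i + a_min ≤ p j, for 1 ≤ i, j ≤ N
  have key : ∀ i j, 1 ≤ i → j ≤ N → i < j → p i + a_min ≤ p j := by
    intro i j h1 h2 hij
    induction j with
    | zero => omega
    | succ k ih =>
      rcases Nat.lt_or_ge i k with hk | hk
      · have := ih (by omega) hk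
        have := hgap k (by omega) (by omega)
        omega
      · have : i = k := by omega
        subst this
        exact hgap i h1 h2
  intro i j hi1 hi2 hj1 hj2 hne
  have mi := hmem i hi1 hi2
  have mj := hmem j hj1 hj2
  rcases Nat.lt_or_ge i j with h | h
  · have := key i j hi1 hj2 h
    rw [abs_sub_comm]
    have : (p i : ℤ) + a_min ≤ p j := by exact_mod_cast this
    rw [abs_of_nonneg (by omega)]; omega
  · have hji : j < i := by omega
    have := key j i hj1 hi2 hji
    have : (p j : ℤ) + a_min ≤ p i := by exact_mod_cast this
    rw [abs_of_nonneg (by omega)]; omega
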